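/- Eigenvalue decomposition of the general self-adjoint second-order leading symbol on trace-free symmetric two-tensors: for all real numbers α₀, α₂ the operator α₀·id + 2α₂·Y₂ on Sym²₀(ℝ^m) satisfies (α₀·id + 2α₂·Y₂) ∘ Π_i = μ_i·Π_i for i = 1,2,3, where μ₁ = α₀, μ₂ = α₀ + α₂, μ₃ = α₀ + (2(m−1)/m)·α₂. Equivalently, Y₂∘Π₁ = 0, Y₂∘Π₂ = (1/2)Π₂, and Y₂∘Π₃ = ((m−1)/m)Π₃. -/

import Mathlib

open Matrix

namespace NLT

/-- `|ξ|²`, the squared Euclidean norm of `ξ ∈ ℝ^m`. -/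
noncomputable def nsq {m : ℕ} (ξ : Fin m → ℝ) : ℝ := ∑ i, ξ i ^ 2

/-- `(X₁φ)_{αβ} = δ_{αβ} tr φ`. -/
noncomputable def X1 {m : ℕ} (φ : Matrix (Fin m) (Fin m) ℝ) : Matrix (Fin m) (Fin m) ℝ :=
  Matrix.of fun α β => (if α = β then (1 : ℝ) else 0) * φ.trace

/-- `(X₂φ)_{αβ} = (1/(2|ξ|²)) (ξ_α (φξ)_β + ξ_β (φξ)_α)`. -/
noncomputable def X2 {m : ℕ} (ξ : Fin m → ℝ) (φ : Matrix (Fin m) (Fin m) ℝ) :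
    Matrix (Fin m) (Fin m) ℝ :=
  Matrix.of fun α β => (1 / (2 * nsq ξ)) * (ξ α * φ.mulVec ξ β + ξ β * φ.mulVec ξ α)

/-- `(X₃φ)_{αβ} = (1/|ξ|²) ξ_α ξ_β tr φ`. -/
noncomputable def X3 {m : ℕ} (ξ : Fin m → ℝ) (φ : Matrix (Fin m) (Fin m) ℝ) :
    Matrix (Fin m) (Fin m) ℝ :=
  Matrix.of fun α β => (1 / nsq ξ) * (ξ α * ξ β * φ.trace)

/-- `(X₄φ)_{αβ} = (1/|ξ|²) δ_{αβ} ⟨ξ, φξ⟩`. -/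
noncomputable def X4 {m : ℕ} (ξ : Fin m → ℝ) (φ : Matrix (Fin m) (Fin m) ℝ) :
    Matrix (Fin m) (Fin m) ℝ :=
  Matrix.of fun α β => (1 / nsq ξ) * (if α = β then (1 : ℝ) else 0) * (ξ ⬝ᵥ φ.mulVec ξ)

/-- `(X₅φ)_{αβ} = (1/|ξ|⁴) ξ_α ξ_β ⟨ξ, φξ⟩`. -/
noncomputable def X5 {m : ℕ} (ξ : Fin m → ℝ) (φ : Matrix (Fin m) (Fin m) ℝ) :
    Matrix (Fin m) (Fin m) ℝ :=
  Matrix.of fun α β => (1 / (nsq ξ) ^ 2) * (ξ α * ξ β * (ξ ⬝ᵥ φ.mulVec ξ))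

/-- `Y₂ = X₂ − (1/m) X₄`, regarded on trace-free symmetric two-tensors. -/
noncomputable def Y2 {m : ℕ} (ξ : Fin m → ℝ) (φ : Matrix (Fin m) (Fin m) ℝ) :
    Matrix (Fin m) (Fin m) ℝ :=
  X2 ξ φ - ((1 : ℝ) / m) • X4 ξ φ

/-- `Y₅ = X₅ − (1/m) X₄`, regarded on trace-free symmetric two-tensors. -/
noncomputable def Y5 {m : ℕ} (ξ : Fin m → ℝ) (φ : Matrix (Fin m) (Fin m) ℝ) :
    Matrix (Fin m) (Fin m) ℝ :=
  X5 ξ φ - ((1 : ℝ) / m) • X4 ξ φ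

/-- `Π₁ = id − 2Y₂ + ((m−2)/(m−1)) Y₅`. -/
noncomputable def Pi1 {m : ℕ} (ξ : Fin m → ℝ) (φ : Matrix (Fin m) (Fin m) ℝ) :
    Matrix (Fin m) (Fin m) ℝ :=
  φ - (2 : ℝ) • Y2 ξ φ + (((m : ℝ) - 2) / ((m : ℝ) - 1)) • Y5 ξ φ

/-- `Π₂ = 2(Y₂ − Y₅)`. -/
noncomputable def Pi2 {m : ℕ} (ξ : Fin m → ℝ) (φ : Matrix (Fin m) (Fin m) ℝ) :
    Matrix (Fin m) (Fin m) ℝ :=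
  (2 : ℝ) • (Y2 ξ φ - Y5 ξ φ)

/-- `Π₃ = (m/(m−1)) Y₅`. -/
noncomputable def Pi3 {m : ℕ} (ξ : Fin m → ℝ) (φ : Matrix (Fin m) (Fin m) ℝ) :
    Matrix (Fin m) (Fin m) ℝ :=
  ((m : ℝ) / ((m : ℝ) - 1)) • Y5 ξ φ

variable {m : ℕ} (ξ : Fin m → ℝ) (φ : Matrix (Fin m) (Fin m) ℝ)

lemma dot_self : ξ ⬝ᵥ ξ = nsq ξ := by
  simp [dotProduct, nsq, sq]

lemma dot_mulVec_self : φ.mulVec ξ ⬝ᵥ ξ = ξ ⬝ᵥ φ.mulVec ξ := dotProduct_comm _ _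

lemma mulVec_apply (M : Matrix (Fin m) (Fin m) ℝ) (α : Fin m) :
    M.mulVec ξ α = ∑ x, M α x * ξ x := rfl

lemma dot_apply (f : Fin m → ℝ) : ξ ⬝ᵥ f = ∑ x, ξ x * f x := rfl

lemma X2_mulVec : (X2 ξ φ).mulVec ξ = fun α =>
    (1 / (2 * nsq ξ)) * (ξ α * (ξ ⬝ᵥ φ.mulVec ξ) + nsq ξ * φ.mulVec ξ α) := by
  funext α
  rw [mulVec_apply,
    Finset.sum_congr rfl (fun x _ => show
      X2 ξ φ α x * ξ x
      = (1 / (2 * nsq ξ) * ξ α) * (φ.mulVec ξ x * ξ x)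
        + (1 / (2 * nsq ξ) * φ.mulVec ξ α) * (ξ x * ξ x) from by
        simp only [X2, of_apply]; ring),
    Finset.sum_add_distrib, ← Finset.mul_sum, ← Finset.mul_sum,
    show ∑ x, φ.mulVec ξ x * ξ x = ξ ⬝ᵥ φ.mulVec ξ from dot_mulVec_self ξ φ,
    show ∑ x, ξ x * ξ x = nsq ξ from dot_self ξ]
  ring

lemma X4_mulVec : (X4 ξ φ).mulVec ξ = fun α =>
    (1 / nsq ξ) * (ξ ⬝ᵥ φ.mulVec ξ) * ξ α := by
  funext α
  rw [mulVec_apply,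
    Finset.sum_congr rfl (fun x _ => show
      X4 ξ φ α x * ξ x
      = (if α = x then (1:ℝ) else 0) * (1 / nsq ξ * (ξ ⬝ᵥ φ.mulVec ξ) * ξ x) from by
        simp only [X4, of_apply]; ring)]
  simp

lemma X5_mulVec : (X5 ξ φ).mulVec ξ = fun α =>
    (1 / (nsq ξ) ^ 2) * (ξ ⬝ᵥ φ.mulVec ξ) * nsq ξ * ξ α := by
  funext α
  rw [mulVec_apply,
    Finset.sum_congr rfl (fun x _ => show
      X5 ξ φ α x * ξ x
      = (1 / (nsq ξ) ^ 2 * ξ α * (ξ ⬝ᵥ φ.mulVec ξ)) * (ξ x * ξ x) from by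
        simp only [X5, of_apply]; ring),
    ← Finset.mul_sum, show ∑ x, ξ x * ξ x = nsq ξ from dot_self ξ]
  ring

lemma dot_X2 (hn : nsq ξ ≠ 0) : ξ ⬝ᵥ (X2 ξ φ).mulVec ξ = ξ ⬝ᵥ φ.mulVec ξ := by
  rw [X2_mulVec, dot_apply,
    Finset.sum_congr rfl (fun x _ => show
      ξ x * ((fun α => (1 / (2 * nsq ξ)) * (ξ α * (ξ ⬝ᵥ φ.mulVec ξ) + nsq ξ * φ.mulVec ξ α)) x)
      = (1 / (2 * nsq ξ) * (ξ ⬝ᵥ φ.mulVec ξ)) * (ξ x * ξ x)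
        + (1 / (2 * nsq ξ) * nsq ξ) * (ξ x * φ.mulVec ξ x) from by ring),
    Finset.sum_add_distrib, ← Finset.mul_sum, ← Finset.mul_sum,
    show ∑ x, ξ x * ξ x = nsq ξ from dot_self ξ,
    show ∑ x, ξ x * φ.mulVec ξ x = ξ ⬝ᵥ φ.mulVec ξ from rfl]
  field_simp
  ring

lemma dot_X4 : ξ ⬝ᵥ (X4 ξ φ).mulVec ξ = (1 / nsq ξ) * nsq ξ * (ξ ⬝ᵥ φ.mulVec ξ) := by
  rw [X4_mulVec, dot_apply,
    Finset.sum_congr rfl (fun x _ => show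
      ξ x * ((fun α => (1 / nsq ξ) * (ξ ⬝ᵥ φ.mulVec ξ) * ξ α) x)
      = (1 / nsq ξ * (ξ ⬝ᵥ φ.mulVec ξ)) * (ξ x * ξ x) from by ring),
    ← Finset.mul_sum, show ∑ x, ξ x * ξ x = nsq ξ from dot_self ξ]
  ring

lemma dot_X5 : ξ ⬝ᵥ (X5 ξ φ).mulVec ξ
    = (1 / (nsq ξ)^2) * (nsq ξ)^2 * (ξ ⬝ᵥ φ.mulVec ξ) := by
  rw [X5_mulVec, dot_apply,
    Finset.sum_congr rfl (fun x _ => show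
      ξ x * ((fun α => (1 / (nsq ξ)^2) * (ξ ⬝ᵥ φ.mulVec ξ) * nsq ξ * ξ α) x)
      = (1 / (nsq ξ)^2 * (ξ ⬝ᵥ φ.mulVec ξ) * nsq ξ) * (ξ x * ξ x) from by ring),
    ← Finset.mul_sum, show ∑ x, ξ x * ξ x = nsq ξ from dot_self ξ]
  ring

lemma Y2_mulVec (hn : nsq ξ ≠ 0) : (Y2 ξ φ).mulVec ξ = fun α =>
    (1 / (2 * nsq ξ)) * (ξ α * (ξ ⬝ᵥ φ.mulVec ξ) + nsq ξ * φ.mulVec ξ α)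
      - (1 / m) * ((1 / nsq ξ) * (ξ ⬝ᵥ φ.mulVec ξ) * ξ α) := by
  funext α
  simp only [Y2, sub_mulVec, smul_mulVec, X2_mulVec, X4_mulVec, Pi.sub_apply,
    Pi.smul_apply, smul_eq_mul]

lemma dot_Y2 (hn : nsq ξ ≠ 0) :
    ξ ⬝ᵥ (Y2 ξ φ).mulVec ξ = (1 - 1/m) * (ξ ⬝ᵥ φ.mulVec ξ) := by
  simp only [Y2, sub_mulVec, smul_mulVec, dotProduct_sub, dotProduct_smul,
    dot_X2 ξ φ hn, dot_X4, smul_eq_mul]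
  field_simp

lemma Y5_mulVec (hn : nsq ξ ≠ 0) : (Y5 ξ φ).mulVec ξ = fun α =>
    ((1 - 1/m) * (1 / nsq ξ) * (ξ ⬝ᵥ φ.mulVec ξ)) * ξ α := by
  funext α
  simp only [Y5, sub_mulVec, smul_mulVec, X5_mulVec, X4_mulVec, Pi.sub_apply,
    Pi.smul_apply, smul_eq_mul]
  rw [show (1:ℝ)/(nsq ξ)^2 * (ξ ⬝ᵥ φ.mulVec ξ) * nsq ξ = 1/nsq ξ * (ξ ⬝ᵥ φ.mulVec ξ) from by
    field_simp]
  ring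

lemma dot_Y5 (hn : nsq ξ ≠ 0) :
    ξ ⬝ᵥ (Y5 ξ φ).mulVec ξ = (1 - 1/m) * (ξ ⬝ᵥ φ.mulVec ξ) := by
  simp only [Y5, sub_mulVec, smul_mulVec, dotProduct_sub, dotProduct_smul,
    dot_X5, dot_X4, smul_eq_mul]
  field_simp

lemma Y2_Y2 (hn : nsq ξ ≠ 0) (hm : (m:ℝ) ≠ 0) :
    Y2 ξ (Y2 ξ φ) = (1/2 : ℝ) • Y2 ξ φ + (((m:ℝ)-2)/(2*m)) • Y5 ξ φ := by
  ext α β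
  rw [show Y2 ξ (Y2 ξ φ) = X2 ξ (Y2 ξ φ) - ((1:ℝ)/m) • X4 ξ (Y2 ξ φ) from rfl]
  simp only [Matrix.sub_apply, Matrix.smul_apply, smul_eq_mul, X2, X4, of_apply, dot_Y2 ξ φ hn]
  simp only [Y2_mulVec ξ φ hn]
  simp only [Y2, Y5, X2, X4, X5, Matrix.sub_apply, Matrix.add_apply, Matrix.smul_apply, of_apply, smul_eq_mul]
  split_ifs with h <;> [skip; skip] <;> field_simp <;> ring

lemma Y2_Y5 (hn : nsq ξ ≠ 0) (hm : (m:ℝ) ≠ 0) :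
    Y2 ξ (Y5 ξ φ) = (((m:ℝ)-1)/m) • Y5 ξ φ := by
  ext α β
  rw [show Y2 ξ (Y5 ξ φ) = X2 ξ (Y5 ξ φ) - ((1:ℝ)/m) • X4 ξ (Y5 ξ φ) from rfl]
  simp only [Matrix.sub_apply, Matrix.smul_apply, smul_eq_mul, X2, X4, of_apply, dot_Y5 ξ φ hn]
  simp only [Y5_mulVec ξ φ hn]
  simp only [Y5, X4, X5, Matrix.sub_apply, Matrix.smul_apply, of_apply, smul_eq_mul]
  split_ifs with h <;> field_simp <;> ring


lemma Y2_add (A B : Matrix (Fin m) (Fin m) ℝ) : Y2 ξ (A + B) = Y2 ξ A + Y2 ξ B := by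
  ext α β
  simp only [Y2, X2, X4, add_mulVec, dotProduct_add, Matrix.sub_apply, Matrix.add_apply, Matrix.smul_apply,
    of_apply, Pi.add_apply, smul_eq_mul]
  split_ifs <;> ring

lemma Y2_smul (c : ℝ) (A : Matrix (Fin m) (Fin m) ℝ) : Y2 ξ (c • A) = c • Y2 ξ A := by
  ext α β
  simp only [Y2, X2, X4, smul_mulVec, dotProduct_smul, Matrix.sub_apply, Matrix.smul_apply,
    of_apply, Pi.smul_apply, smul_eq_mul]
  split_ifs <;> ring

lemma Y2_sub (A B : Matrix (Fin m) (Fin m) ℝ) : Y2 ξ (A - B) = Y2 ξ A - Y2 ξ B := by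
  ext α β
  simp only [Y2, X2, X4, sub_mulVec, dotProduct_sub, Matrix.sub_apply, Matrix.smul_apply,
    of_apply, Pi.sub_apply, smul_eq_mul]
  split_ifs <;> ring


/-- Eigenvalue decomposition of the general self-adjoint second-order leading symbol
`α₀·id + 2α₂·Y₂` on trace-free symmetric two-tensors: `(α₀·id + 2α₂·Y₂) ∘ Πᵢ = μᵢ·Πᵢ`
with `μ₁ = α₀`, `μ₂ = α₀ + α₂`, `μ₃ = α₀ + (2(m−1)/m)·α₂`; equivalently
`Y₂Π₁ = 0`, `Y₂Π₂ = (1/2)Π₂`, `Y₂Π₃ = ((m−1)/m)Π₃`. -/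
theorem symbol_eigenvalues (m : ℕ) (hm : 2 ≤ m) (ξ : Fin m → ℝ) (hξ : ξ ≠ 0)
    (α₀ α₂ : ℝ) (φ : Matrix (Fin m) (Fin m) ℝ) (hφ : φ.IsSymm) (hφ0 : φ.trace = 0) :
    (α₀ • Pi1 ξ φ + (2 * α₂) • Y2 ξ (Pi1 ξ φ) = α₀ • Pi1 ξ φ ∧
     α₀ • Pi2 ξ φ + (2 * α₂) • Y2 ξ (Pi2 ξ φ) = (α₀ + α₂) • Pi2 ξ φ ∧
     α₀ • Pi3 ξ φ + (2 * α₂) • Y2 ξ (Pi3 ξ φ)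
        = (α₀ + (2 * ((m : ℝ) - 1) / m) * α₂) • Pi3 ξ φ) ∧
    (Y2 ξ (Pi1 ξ φ) = 0 ∧
     Y2 ξ (Pi2 ξ φ) = (1 / 2 : ℝ) • Pi2 ξ φ ∧
     Y2 ξ (Pi3 ξ φ) = (((m : ℝ) - 1) / m) • Pi3 ξ φ) := by
  have hn : nsq ξ ≠ 0 := by
    intro h
    apply hξ
    funext i
    have hz := (Finset.sum_eq_zero_iff_of_nonneg
      (fun i _ => sq_nonneg (ξ i))).1 h i (Finset.mem_univ i)
    exact pow_eq_zero_iff two_ne_zero |>.1 hz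
  have hm0 : (m : ℝ) ≠ 0 := by
    have : m ≠ 0 := by omega
    exact_mod_cast this
  have hm1 : (m : ℝ) - 1 ≠ 0 := by
    have : (2 : ℝ) ≤ (m : ℝ) := by exact_mod_cast hm
    linarith
  have h1 : Y2 ξ (Pi1 ξ φ) = 0 := by
    rw [Pi1, Y2_add, Y2_sub, Y2_smul, Y2_smul, Y2_Y2 ξ φ hn hm0, Y2_Y5 ξ φ hn hm0]
    match_scalars <;> field_simp <;> ring
  have h2 : Y2 ξ (Pi2 ξ φ) = (1 / 2 : ℝ) • Pi2 ξ φ := by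
    rw [Pi2, Y2_smul, Y2_sub, Y2_Y2 ξ φ hn hm0, Y2_Y5 ξ φ hn hm0]
    match_scalars <;> field_simp <;> ring
  have h3 : Y2 ξ (Pi3 ξ φ) = (((m : ℝ) - 1) / m) • Pi3 ξ φ := by
    rw [Pi3, Y2_smul, Y2_Y5 ξ φ hn hm0]
    match_scalars <;> field_simp <;> ring
  refine ⟨⟨?_, ?_, ?_⟩, h1, h2, h3⟩
  · rw [h1]; simp
  · rw [h2]; match_scalars <;> ring
  · rw [h3]; match_scalars <;> field_simp <;> ring


end NLT
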